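/- Let Y be a finite nonempty type, r : Y → ℝ, and α > 0. Let D : Y × Y → ℝ satisfy D(y₁, y₂) > 0 for all y₁, y₂ and D(y₁, y₂) * exp(r(y₂)) = D(y₂, y₁) * exp(r(y₁)) for all y₁, y₂. Define L : (Y → ℝ) → ℝ on the open set of functions with strictly positive values by L(π) = −(1/α) * ∑_{(y₁, y₂) ∈ Y × Y} D(y₁, y₂) * log( π(y₁)^α / (π(y₁)^α + π(y₂)^α) ). Suppose π : Y → ℝ has π(y) > 0 for all y, ∑_{y} π(y) = 1, and there exists λ ∈ ℝ such that the partial derivative of L with respect to the coordinate π(y) equals λ for every y ∈ Y (i.e., π is a first-order stationary point of L on the probability simplex). Then π(y) = exp(r(y)/α) / ∑_{y'} exp(r(y')/α) for all y. -/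

import Mathlib

/-- 'No other first-order stationary point' claim of SPO's Theorem 1: if `π` lies in
the relative interior of the probability simplex and all partial derivatives of the
preference loss `L` at `π` are equal (to a common Lagrange multiplier `l`), then
`π = softmax (r/α)`. The partial derivative with respect to the coordinate `π y`
is the derivative of `t ↦ L (Function.update π y t)` at `t = π y`. -/
theorem spo_no_other_stationary_point (Y : Type*) [Fintype Y] [Nonempty Y]
    [DecidableEq Y] (r : Y → ℝ) (α : ℝ) (hα : 0 < α)
    (D : Y × Y → ℝ) (hD : ∀ y₁ y₂, 0 < D (y₁, y₂))
    (hBT : ∀ y₁ y₂, D (y₁, y₂) * Real.exp (r y₂) = D (y₂, y₁) * Real.exp (r y₁))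
    (L : (Y → ℝ) → ℝ)
    (hL : ∀ p : Y → ℝ, L p = -(1 / α) *
      ∑ yy : Y × Y, D yy * Real.log ((p yy.1) ^ α / ((p yy.1) ^ α + (p yy.2) ^ α)))
    (π : Y → ℝ) (hπ : ∀ y, 0 < π y) (hsum : ∑ y, π y = 1)
    (hstat : ∃ l : ℝ, ∀ y : Y,
      deriv (fun t : ℝ => L (Function.update π y t)) (π y) = l) :
    ∀ y, π y = Real.exp (r y / α) / ∑ y', Real.exp (r y' / α) := by
  obtain ⟨l, hstat⟩ := hstat
  have hπα : ∀ z, (0:ℝ) < π z ^ α := fun z => Real.rpow_pos_of_pos (hπ z) α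
  have hs : ∀ a b : Y, (0:ℝ) < π a ^ α + π b ^ α := fun a b => add_pos (hπα a) (hπα b)
  have hval : ∀ y z : Y, Function.update π y (π y) z = π z := by
    intro y z; rw [Function.update_eq_self]
  have hr : ∀ z : Y, π z ^ (α - 1) = π z ^ α / π z := by
    intro z; rw [Real.rpow_sub (hπ z), Real.rpow_one]
  -- Step 1: the derivative formula
  have hderiv : ∀ y : Y, deriv (fun t : ℝ => L (Function.update π y t)) (π y)
      = -(1 / π y) * ∑ y', (D (y, y') * π y' ^ α - D (y', y) * π y ^ α)
          / (π y ^ α + π y' ^ α) := by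
    intro y
    set c : Y → ℝ := fun z => if z = y then 1 else 0 with hc
    have hu : ∀ z : Y, HasDerivAt (fun t : ℝ => Function.update π y t z) (c z) (π y) := by
      intro z
      by_cases hz : z = y
      · subst hz
        simp only [hc, if_pos rfl]
        have hfun : (fun t : ℝ => Function.update π z t z) = fun t => t := by
          funext t; simp
        rw [hfun]
        exact hasDerivAt_id' (π z)
      · simp only [hc, if_neg hz]
        simpa [Function.update_of_ne hz] using hasDerivAt_const (π y) (π z)
    have hp : ∀ z : Y, HasDerivAt (fun t : ℝ => (Function.update π y t z) ^ α)
        (c z * α * π z ^ (α - 1)) (π y) := by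
      intro z
      have h := (hu z).rpow_const (p := α) (Or.inl (by rw [hval]; exact (hπ z).ne'))
      simpa [hval] using h
    have hterm : ∀ yy : Y × Y, HasDerivAt
        (fun t : ℝ => D yy * (α * Real.log (Function.update π y t yy.1)
          - Real.log ((Function.update π y t yy.1) ^ α + (Function.update π y t yy.2) ^ α)))
        (D yy * (α * (c yy.1 / π yy.1)
          - (c yy.1 * α * π yy.1 ^ (α - 1) + c yy.2 * α * π yy.2 ^ (α - 1))
            / (π yy.1 ^ α + π yy.2 ^ α))) (π y) := by
      intro yy
      have h1 : HasDerivAt (fun t : ℝ => Real.log (Function.update π y t yy.1))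
          (c yy.1 / π yy.1) (π y) := by
        have := (hu yy.1).log (by rw [hval]; exact (hπ yy.1).ne')
        simpa [hval] using this
      have h2 : HasDerivAt
          (fun t : ℝ => Real.log ((Function.update π y t yy.1) ^ α + (Function.update π y t yy.2) ^ α))
          ((c yy.1 * α * π yy.1 ^ (α - 1) + c yy.2 * α * π yy.2 ^ (α - 1))
            / (π yy.1 ^ α + π yy.2 ^ α)) (π y) := by
        have := ((hp yy.1).add (hp yy.2)).log (by simp only [Pi.add_apply, hval]; exact (hs yy.1 yy.2).ne')
        simpa [hval] using this
      exact ((h1.const_mul α).sub h2).const_mul (D yy)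
    have hsum' : HasDerivAt
        (fun t : ℝ => -(1/α) * ∑ yy : Y × Y, D yy * (α * Real.log (Function.update π y t yy.1)
          - Real.log ((Function.update π y t yy.1) ^ α + (Function.update π y t yy.2) ^ α)))
        (-(1/α) * ∑ yy : Y × Y, D yy * (α * (c yy.1 / π yy.1)
          - (c yy.1 * α * π yy.1 ^ (α - 1) + c yy.2 * α * π yy.2 ^ (α - 1))
            / (π yy.1 ^ α + π yy.2 ^ α))) (π y) :=
      (HasDerivAt.fun_sum (fun yy _ => hterm yy)).const_mul _
    have hev : (fun t : ℝ => L (Function.update π y t)) =ᶠ[nhds (π y)]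
        (fun t : ℝ => -(1/α) * ∑ yy : Y × Y, D yy * (α * Real.log (Function.update π y t yy.1)
          - Real.log ((Function.update π y t yy.1) ^ α + (Function.update π y t yy.2) ^ α))) := by
      filter_upwards [isOpen_Ioi.mem_nhds (hπ y)] with t ht
      rw [hL]
      congr 1
      refine Finset.sum_congr rfl fun yy _ => ?_
      have hpos : ∀ z : Y, 0 < Function.update π y t z := by
        intro z
        rw [Function.update_apply]
        split
        · exact ht
        · exact hπ z
      have h1 := Real.rpow_pos_of_pos (hpos yy.1) α
      have h2 := Real.rpow_pos_of_pos (hpos yy.2) α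
      rw [Real.log_div h1.ne' (add_pos h1 h2).ne', Real.log_rpow (hpos yy.1)]
    rw [hev.deriv_eq, hsum'.deriv]
    -- algebraic simplification of the derivative value
    have hkey : ∀ a b : Y, -(1/α) * (D (a,b) * (α * (c a / π a)
          - (c a * α * π a ^ (α - 1) + c b * α * π b ^ (α - 1)) / (π a ^ α + π b ^ α)))
        = (if a = y then D (y,b) * (π y ^ (α-1) / (π y ^ α + π b ^ α) - 1 / π y) else 0)
          + (if b = y then D (a,y) * (π y ^ (α-1) / (π a ^ α + π y ^ α)) else 0) := by
      intro a b
      have hπa := (hπ a).ne'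
      have hπb := (hπ b).ne'
      have hsab := (hs a b).ne'
      have hα' := hα.ne'
      by_cases hay : a = y
      · subst hay
        by_cases hby : b = a
        · subst hby
          simp only [hc, if_pos rfl, ↓reduceIte]
          rw [hr]
          field_simp
          ring
        · simp only [hc, if_pos rfl, if_neg hby, ↓reduceIte]
          rw [hr]
          field_simp
          ring
      · by_cases hby : b = y
        · subst hby
          simp only [hc, if_pos rfl, if_neg hay, ↓reduceIte]
          rw [hr]
          field_simp
          ring
        · simp only [hc, if_neg hay, if_neg hby]
          simp
    rw [Finset.mul_sum]
    rw [Finset.sum_congr rfl (fun yy _ => hkey yy.1 yy.2)]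
    rw [Fintype.sum_prod_type]
    have e1 : ∀ x : Y, (∑ y1 : Y, ((if x = y then D (y, y1) * (π y ^ (α-1) / (π y ^ α + π y1 ^ α) - 1 / π y) else 0)
          + (if y1 = y then D (x, y) * (π y ^ (α-1) / (π x ^ α + π y ^ α)) else 0)))
        = (if x = y then ∑ y1 : Y, D (y, y1) * (π y ^ (α-1) / (π y ^ α + π y1 ^ α) - 1 / π y) else 0)
          + D (x, y) * (π y ^ (α-1) / (π x ^ α + π y ^ α)) := by
      intro x
      rw [Finset.sum_add_distrib,
        Finset.sum_ite_eq' Finset.univ y (fun _ => D (x, y) * (π y ^ (α-1) / (π x ^ α + π y ^ α))),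
        if_pos (Finset.mem_univ y)]
      congr 1
      split <;> simp
    rw [Finset.sum_congr rfl fun x _ => e1 x, Finset.sum_add_distrib,
      Finset.sum_ite_eq' Finset.univ y _, if_pos (Finset.mem_univ y),
      ← Finset.sum_add_distrib, Finset.mul_sum]
    refine Finset.sum_congr rfl fun b _ => ?_
    have hπy := (hπ y).ne'
    have h1 := (hs y b).ne'
    have h2 := (hs b y).ne'
    rw [hr]
    field_simp
    ring
  -- Step 2: stationarity gives G y = -l * π y
  set G : Y → ℝ := fun y => ∑ y', (D (y, y') * π y' ^ α - D (y', y) * π y ^ α)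
      / (π y ^ α + π y' ^ α) with hG
  have hGl : ∀ y, G y = -l * π y := by
    intro y
    have h := hstat y
    rw [hderiv y] at h
    have hπy := (hπ y).ne'
    rw [hG]
    field_simp at h
    linarith
  -- Step 3: sum of G is zero, hence l = 0 and G ≡ 0
  have hGsum : ∑ y, G y = 0 := by
    have hcomm : ∑ y, G y = ∑ y' : Y, ∑ y : Y,
        (D (y, y') * π y' ^ α - D (y', y) * π y ^ α) / (π y ^ α + π y' ^ α) := by
      rw [hG]
      exact Finset.sum_comm
    have h2 : ∑ y, G y + ∑ y, G y = 0 := by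
      nth_rewrite 2 [hcomm]
      rw [hG, ← Finset.sum_add_distrib]
      refine Finset.sum_eq_zero fun a _ => ?_
      rw [← Finset.sum_add_distrib]
      refine Finset.sum_eq_zero fun b _ => ?_
      ring
    linarith
  have hl : l = 0 := by
    have h3 : ∑ y, G y = -l := by
      rw [Finset.sum_congr rfl fun y _ => hGl y, ← Finset.mul_sum, hsum, mul_one]
    rw [hGsum] at h3
    linarith
  have hG0 : ∀ y, G y = 0 := by
    intro y
    rw [hGl y, hl]
    ring
  -- Step 4: Bradley-Terry rewriting
  have hG0' : ∀ y : Y, ∑ y', (D (y, y') * Real.exp (r y') / (π y ^ α + π y' ^ α))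
      * (π y' ^ α * Real.exp (-(r y')) - π y ^ α * Real.exp (-(r y))) = 0 := by
    intro y
    rw [← hG0 y, hG]
    refine Finset.sum_congr rfl fun b _ => ?_
    rw [div_mul_eq_mul_div]
    congr 1
    have hbt := hBT y b
    have he : Real.exp (-(r y)) * Real.exp (r y) = 1 := by
      rw [← Real.exp_add]; simp
    have he' : Real.exp (-(r b)) * Real.exp (r b) = 1 := by
      rw [← Real.exp_add]; simp
    linear_combination D (y, b) * π b ^ α * he' - π y ^ α * Real.exp (-(r y)) * hbt
      - D (b, y) * π y ^ α * he
  -- Step 5: the quantity π z ^ α * exp (-(r z)) is constant (max argument)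
  obtain ⟨y₀, hy₀⟩ := Finite.exists_max (fun z => π z ^ α * Real.exp (-(r z)))
  have hkconst : ∀ z, π z ^ α * Real.exp (-(r z)) = π y₀ ^ α * Real.exp (-(r y₀)) := by
    intro z
    have h0 := hG0' y₀
    have hnonpos : ∀ i ∈ Finset.univ, (D (y₀, i) * Real.exp (r i) / (π y₀ ^ α + π i ^ α))
        * (π i ^ α * Real.exp (-(r i)) - π y₀ ^ α * Real.exp (-(r y₀))) ≤ 0 := by
      intro i _
      apply mul_nonpos_of_nonneg_of_nonpos
      · exact (div_pos (mul_pos (hD y₀ i) (Real.exp_pos _)) (hs y₀ i)).le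
      · simpa using sub_nonpos.mpr (hy₀ i)
    have hz := (Finset.sum_eq_zero_iff_of_nonpos hnonpos).mp h0 z (Finset.mem_univ z)
    have hw : 0 < D (y₀, z) * Real.exp (r z) / (π y₀ ^ α + π z ^ α) :=
      div_pos (mul_pos (hD y₀ z) (Real.exp_pos _)) (hs y₀ z)
    rcases mul_eq_zero.mp hz with h | h
    · exact absurd h hw.ne'
    · linarith [sub_eq_zero.mp h]
  -- Step 6: conclude
  classical
  let z₀ := y₀
  have hfinal : ∀ z : Y, π z = π z₀ / Real.exp (r z₀ / α) * Real.exp (r z / α) := by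
    intro z
    have hk := hkconst z
    have he : ∀ w : Y, Real.exp (r w / α) ^ α = Real.exp (r w) := by
      intro w
      rw [← Real.exp_mul, div_mul_cancel₀ _ hα.ne']
    have hration : (π z / Real.exp (r z / α)) ^ α = (π z₀ / Real.exp (r z₀ / α)) ^ α := by
      rw [Real.div_rpow (hπ z).le (Real.exp_pos _).le,
        Real.div_rpow (hπ z₀).le (Real.exp_pos _).le, he, he,
        div_eq_div_iff (Real.exp_pos _).ne' (Real.exp_pos _).ne']
      have e1 : Real.exp (-(r z)) * Real.exp (r z) = 1 := by rw [← Real.exp_add]; simp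
      have e2 : Real.exp (-(r z₀)) * Real.exp (r z₀) = 1 := by rw [← Real.exp_add]; simp
      nlinarith [Real.exp_pos (r z), Real.exp_pos (r z₀), Real.exp_pos (-(r z)), Real.exp_pos (-(r z₀)),
        hπα z, hπα z₀]
    have hposz : 0 < π z / Real.exp (r z / α) := div_pos (hπ z) (Real.exp_pos _)
    have hposz₀ : 0 < π z₀ / Real.exp (r z₀ / α) := div_pos (hπ z₀) (Real.exp_pos _)
    have heq : π z / Real.exp (r z / α) = π z₀ / Real.exp (r z₀ / α) := by
      calc π z / Real.exp (r z / α)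
          = ((π z / Real.exp (r z / α)) ^ α) ^ α⁻¹ := (Real.rpow_rpow_inv hposz.le hα.ne').symm
        _ = ((π z₀ / Real.exp (r z₀ / α)) ^ α) ^ α⁻¹ := by rw [hration]
        _ = π z₀ / Real.exp (r z₀ / α) := Real.rpow_rpow_inv hposz₀.le hα.ne'
    have hez := (Real.exp_pos (r z / α)).ne'
    have hez₀ := (Real.exp_pos (r z₀ / α)).ne'
    field_simp at heq ⊢
    linarith [heq]
  intro y
  have hsum' : π z₀ / Real.exp (r z₀ / α) * (∑ y', Real.exp (r y' / α)) = 1 := by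
    have hc : ∑ y' : Y, π z₀ / Real.exp (r z₀ / α) * Real.exp (r y' / α) = ∑ y', π y' :=
      Finset.sum_congr rfl fun z _ => (hfinal z).symm
    rw [Finset.mul_sum, hc, hsum]
  have hSpos : 0 < ∑ y', Real.exp (r y' / α) :=
    Finset.sum_pos (fun i _ => Real.exp_pos _) Finset.univ_nonempty
  rw [hfinal y, eq_div_iff hSpos.ne']
  calc π z₀ / Real.exp (r z₀ / α) * Real.exp (r y / α) * (∑ y', Real.exp (r y' / α))
      = π z₀ / Real.exp (r z₀ / α) * (∑ y', Real.exp (r y' / α)) * Real.exp (r y / α) := by ring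
    _ = Real.exp (r y / α) := by rw [hsum', one_mul]
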